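/- Let N ≥ 2 be an integer and C := ∫_0^1 (e^{-x}−1)/x dx + ∫_1^∞ e^{-x}/x dx. Then as σ → ∞, log N + ∑_{n=1}^∞ e^{-n/σ} log((n+N)/(n+N−1)) = log(σ + N) + C + O_N((log σ)/σ). -/

import Mathlib

open Real MeasureTheory Filter

noncomputable def constC : ℝ :=
  (∫ x in Set.Ioc (0:ℝ) 1, (exp (-x) - 1) / x) + ∫ x in Set.Ioi (1:ℝ), exp (-x) / x

namespace LogSeriesAux

open Set

lemma shiftIoi (f : ℝ → ℝ) (a d : ℝ) :
    ∫ x in Ioi a, f (x + d) = ∫ x in Ioi (a + d), f x := by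
  have A : MeasurableEmbedding (fun x : ℝ => x + d) :=
    (Homeomorph.addRight d).isClosedEmbedding.measurableEmbedding
  have := A.setIntegral_map (μ := volume) f (Ioi (a + d))
  rw [map_add_right_eq_self volume d] at this
  rw [this]
  congr 1
  ext x
  simp [lt_sub_iff_add_lt]

lemma intJ {δ : ℝ} (hδ : 0 < δ) : IntegrableOn (fun x => exp (-x) / x) (Ioi δ) := by
  have h1 : IntegrableOn (fun x => δ⁻¹ * exp (-1 * x)) (Ioi δ) :=
    (exp_neg_integrableOn_Ioi δ one_pos).const_mul _
  refine h1.mono' ?_ ?_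
  · refine (ContinuousOn.div (by fun_prop) continuousOn_id ?_).aestronglyMeasurable
      measurableSet_Ioi
    intro x hx; exact (hδ.trans hx).ne'
  · filter_upwards [ae_restrict_mem measurableSet_Ioi] with x hx
    have hx0 : 0 < x := hδ.trans hx
    rw [Real.norm_eq_abs, abs_of_nonneg (by positivity), div_eq_inv_mul, neg_one_mul]
    gcongr
    exact le_of_lt hx

lemma intK {b : ℝ} : IntegrableOn (fun x => (exp (-x) - 1) / x) (Ioc 0 b) := by
  have h1 : IntegrableOn (fun _ : ℝ => (1:ℝ)) (Ioc 0 b) :=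
    integrableOn_const measure_Ioc_lt_top.ne
  refine h1.mono' ?_ ?_
  · refine (ContinuousOn.div (by fun_prop) continuousOn_id ?_).aestronglyMeasurable
      measurableSet_Ioc
    intro x hx; exact hx.1.ne'
  · filter_upwards [ae_restrict_mem measurableSet_Ioc] with x hx
    have h1 : exp (-x) ≤ 1 := by rw [Real.exp_le_one_iff]; linarith [hx.1]
    have h2 := Real.add_one_le_exp (-x)
    rw [Real.norm_eq_abs, abs_div, abs_of_pos hx.1, div_le_one hx.1, abs_sub_comm,
      abs_of_nonneg (by linarith)]
    linarith [hx.1]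

lemma Kbound {δ : ℝ} (hδ : 0 ≤ δ) : |∫ x in Ioc (0:ℝ) δ, (exp (-x) - 1) / x| ≤ δ := by
  have habs : ∀ x ∈ Ioc (0:ℝ) δ, ‖(exp (-x) - 1) / x‖ ≤ 1 := by
    intro x hx
    have h1 : exp (-x) ≤ 1 := by rw [Real.exp_le_one_iff]; linarith [hx.1]
    have h2 := Real.add_one_le_exp (-x)
    rw [Real.norm_eq_abs, abs_div, abs_of_pos hx.1, div_le_one hx.1, abs_sub_comm,
      abs_of_nonneg (by linarith)]
    linarith [hx.1]
  have := norm_setIntegral_le_of_norm_le_const (μ := volume) (s := Ioc (0:ℝ) δ)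
    (f := fun x => (exp (-x) - 1) / x) (C := 1) measure_Ioc_lt_top
    habs
  rw [Real.norm_eq_abs] at this
  calc |∫ x in Ioc (0:ℝ) δ, (exp (-x) - 1) / x| ≤ 1 * (volume (Ioc (0:ℝ) δ)).toReal := this
    _ = δ := by rw [one_mul, Real.volume_Ioc]; simp [hδ]

lemma Jform {δ : ℝ} (h0 : 0 < δ) (h1 : δ ≤ 1) :
    ∫ x in Ioi δ, exp (-x) / x
      = constC - Real.log δ - ∫ x in Ioc (0:ℝ) δ, (exp (-x) - 1) / x := by
  have intmid : IntegrableOn (fun x => exp (-x) / x) (Ioc δ 1) :=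
    (intJ h0).mono_set Ioc_subset_Ioi_self
  have int1 : IntegrableOn (fun x => (exp (-x) - 1) / x) (Ioc δ 1) :=
    intK.mono_set (Ioc_subset_Ioc_left h0.le)
  have int2 : IntegrableOn (fun x => 1 / x) (Ioc δ 1) := by
    refine ((ContinuousOn.div continuousOn_const continuousOn_id ?_).integrableOn_Icc).mono_set
      Ioc_subset_Icc_self
    intro x hx; exact (h0.trans_le hx.1).ne'
  have hsplit : ∫ x in Ioi δ, exp (-x) / x
      = (∫ x in Ioc δ 1, exp (-x) / x) + ∫ x in Ioi (1:ℝ), exp (-x) / x := by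
    rw [← setIntegral_union (Ioc_disjoint_Ioi le_rfl) measurableSet_Ioi intmid (intJ one_pos),
      Ioc_union_Ioi_eq_Ioi h1]
  have hmid : ∫ x in Ioc δ 1, exp (-x) / x
      = (∫ x in Ioc δ 1, (exp (-x) - 1) / x) + ∫ x in Ioc δ 1, 1 / x := by
    rw [← integral_add int1 int2]
    refine setIntegral_congr_fun measurableSet_Ioc fun x hx => ?_
    have : x ≠ 0 := (h0.trans hx.1).ne'
    field_simp
    ring
  have hlog : ∫ x in Ioc δ 1, 1 / x = - Real.log δ := by
    rw [← intervalIntegral.integral_of_le h1, integral_one_div, one_div, Real.log_inv]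
    rw [Set.uIcc_of_le h1]
    exact fun h => absurd h.1 (not_le.2 h0)
  have hKsplit : ∫ x in Ioc (0:ℝ) 1, (exp (-x) - 1) / x
      = (∫ x in Ioc (0:ℝ) δ, (exp (-x) - 1) / x) + ∫ x in Ioc δ 1, (exp (-x) - 1) / x := by
    rw [← setIntegral_union ?_ measurableSet_Ioc intK int1, Ioc_union_Ioc_eq_Ioc h0.le h1]
    rw [Set.Ioc_disjoint_Ioc]
    simp [h0.le, h1]
  rw [hsplit, hmid, hlog]
  rw [constC, hKsplit]
  ring

lemma Isub {N σ : ℝ} (hN : 0 < N) (hσ : 0 < σ) :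
    ∫ t in Ioi (0:ℝ), exp (-t/σ) / (t + N)
      = exp (N/σ) * ∫ x in Ioi (N/σ), exp (-x) / x := by
  set g : ℝ → ℝ := fun x => exp (N/σ) * (exp (-x) / x) with hg
  have h3 : ∀ t ∈ Ioi (0:ℝ), g (σ⁻¹ * (t + N)) = σ * (exp (-t/σ) / (t + N)) := by
    intro t ht
    have ht' : (0:ℝ) < t := ht
    have e1 : exp (N/σ) * exp (-(σ⁻¹ * (t + N))) = exp (-t/σ) := by
      rw [← Real.exp_add]; congr 1; field_simp; ring
    rw [hg]
    simp only
    rw [mul_div_assoc', e1]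
    field_simp
  have hL : ∫ t in Ioi (0:ℝ), g (σ⁻¹ * (t + N)) = σ * ∫ t in Ioi (0:ℝ), exp (-t/σ) / (t+N) := by
    rw [setIntegral_congr_fun measurableSet_Ioi h3, integral_const_mul]
  have hR : ∫ t in Ioi (0:ℝ), g (σ⁻¹ * (t + N)) = σ * ∫ x in Ioi (N/σ), g x := by
    have h1 : ∫ t in Ioi (0:ℝ), g (σ⁻¹ * (t + N)) = ∫ u in Ioi ((0:ℝ) + N), g (σ⁻¹ * u) :=
      shiftIoi (fun u => g (σ⁻¹ * u)) 0 N
    have h2 : ∫ u in Ioi N, g (σ⁻¹ * u) = (σ⁻¹)⁻¹ • ∫ x in Ioi (σ⁻¹ * N), g x :=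
      integral_comp_mul_left_Ioi g N (inv_pos.2 hσ)
    rw [h1, zero_add, h2, inv_inv, smul_eq_mul, inv_mul_eq_div]
  have hfin := hL.symm.trans hR
  have h4 : ∫ x in Ioi (N/σ), g x = exp (N/σ) * ∫ x in Ioi (N/σ), exp (-x)/x := by
    rw [hg, integral_const_mul]
  rw [h4] at hfin
  exact mul_left_cancel₀ hσ.ne' hfin

lemma unionIoc : (⋃ n : ℕ, Ioc (n:ℝ) (n+1)) = Ioi 0 := by
  ext x
  simp only [mem_iUnion, mem_Ioc, mem_Ioi]
  constructor
  · rintro ⟨n, hn, -⟩; exact lt_of_le_of_lt (Nat.cast_nonneg n) hn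
  · intro hx
    have hc : 1 ≤ ⌈x⌉₊ := Nat.one_le_ceil_iff.2 hx
    have hcast : ((⌈x⌉₊ - 1 : ℕ) : ℝ) = (⌈x⌉₊ : ℝ) - 1 := by
      push_cast [hc]; ring
    refine ⟨⌈x⌉₊ - 1, ?_, ?_⟩
    · rw [hcast]; have := Nat.ceil_lt_add_one hx.le; linarith
    · rw [hcast]; have := Nat.le_ceil x; linarith

lemma pairwiseIoc : Pairwise (Function.onFun Disjoint (fun n : ℕ => Ioc (n:ℝ) (n+1))) := by
  intro m n hmn
  rw [Function.onFun, Set.Ioc_disjoint_Ioc]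
  rcases lt_or_gt_of_ne hmn with h | h
  · have : (m:ℝ) + 1 ≤ n := by exact_mod_cast Nat.succ_le_of_lt h
    exact le_trans (min_le_left _ _) (this.trans (le_max_right _ _))
  · have : (n:ℝ) + 1 ≤ m := by exact_mod_cast Nat.succ_le_of_lt h
    exact le_trans (min_le_right _ _) (this.trans (le_max_left _ _))

lemma intI {N σ : ℝ} (hN : 0 < N) (hσ : 0 < σ) :
    IntegrableOn (fun t => exp (-t/σ) / (t + N)) (Ioi 0) := by
  have h1 : IntegrableOn (fun t => N⁻¹ * exp (-σ⁻¹ * t)) (Ioi 0) :=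
    (exp_neg_integrableOn_Ioi 0 (inv_pos.2 hσ)).const_mul _
  refine h1.mono' ?_ ?_
  · refine (ContinuousOn.div (by fun_prop) (by fun_prop) ?_).aestronglyMeasurable
      measurableSet_Ioi
    intro x hx
    have : (0:ℝ) < x := hx
    positivity
  · filter_upwards [ae_restrict_mem measurableSet_Ioi] with t ht
    have ht0 : (0:ℝ) < t := ht
    have he : -t/σ = -σ⁻¹ * t := by field_simp
    rw [Real.norm_eq_abs, abs_of_nonneg (by positivity), he, div_eq_inv_mul]
    gcongr
    linarith

lemma term_eq (N : ℕ) (hN : 1 ≤ N) (n : ℕ) :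
    Real.log (((n:ℝ) + 1 + N) / ((n:ℝ) + N)) = ∫ t in (n:ℝ)..((n:ℝ)+1), 1 / (t + N) := by
  have h0 : (0:ℝ) < (n:ℝ) + N := by
    have : (1:ℝ) ≤ N := by exact_mod_cast hN
    positivity
  rw [intervalIntegral.integral_comp_add_right (fun x => 1 / x) (N:ℝ),
    integral_one_div ?side]
  case side =>
    rw [Set.uIcc_of_le (by linarith)]
    rintro ⟨h1, -⟩
    linarith

lemma ivIntDiv {N : ℕ} (hN : 1 ≤ N) (n : ℕ) {f : ℝ → ℝ} (hf : Continuous f) :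
    IntervalIntegrable (fun t => f t / (t + (N:ℝ))) volume (n:ℝ) ((n:ℝ)+1) := by
  apply ContinuousOn.intervalIntegrable
  refine ContinuousOn.div hf.continuousOn (by fun_prop) ?_
  intro t ht
  rw [Set.uIcc_of_le (by linarith)] at ht
  have h1 : (0:ℝ) ≤ n := Nat.cast_nonneg n
  have h2 : (1:ℝ) ≤ N := by exact_mod_cast hN
  have h3 := ht.1
  intro h
  linarith

lemma ivIntC {N : ℕ} (hN : 1 ≤ N) (n : ℕ) (c : ℝ) :
    IntervalIntegrable (fun t => exp c * (1 / (t + (N:ℝ)))) volume (n:ℝ) ((n:ℝ)+1) := by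
  have := (ivIntDiv hN n (continuous_const : Continuous fun _ : ℝ => exp c))
  simpa only [mul_one_div] using this

lemma ivIntE {N : ℕ} (hN : 1 ≤ N) (n : ℕ) (σ : ℝ) :
    IntervalIntegrable (fun t => exp (-t/σ) / (t + (N:ℝ))) volume (n:ℝ) ((n:ℝ)+1) :=
  ivIntDiv hN n (by fun_prop)

lemma term_upper (N : ℕ) (hN : 1 ≤ N) {σ : ℝ} (hσ : 0 < σ) (n : ℕ) :
    exp (-((n:ℝ)+1)/σ) * Real.log (((n:ℝ) + 1 + N) / ((n:ℝ) + N))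
      ≤ ∫ t in Ioc (n:ℝ) ((n:ℝ)+1), exp (-t/σ) / (t + N) := by
  have h2 : (1:ℝ) ≤ N := by exact_mod_cast hN
  rw [term_eq N hN n, ← intervalIntegral.integral_const_mul,
    ← intervalIntegral.integral_of_le (by linarith : (n:ℝ) ≤ (n:ℝ)+1)]
  refine intervalIntegral.integral_mono_on (by linarith)
    (ivIntC hN n _) (ivIntE hN n σ) ?_
  intro t ht
  have h1 : (0:ℝ) ≤ n := Nat.cast_nonneg n
  rw [mul_one_div]
  gcongr
  · linarith [ht.1]
  · linarith [ht.2]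

lemma term_lower (N : ℕ) (hN : 1 ≤ N) {σ : ℝ} (hσ : 0 < σ) (n : ℕ) :
    exp (-(1/σ)) * ∫ t in Ioc (n:ℝ) ((n:ℝ)+1), exp (-t/σ) / (t + N)
      ≤ exp (-((n:ℝ)+1)/σ) * Real.log (((n:ℝ) + 1 + N) / ((n:ℝ) + N)) := by
  have h2 : (1:ℝ) ≤ N := by exact_mod_cast hN
  rw [term_eq N hN n, ← intervalIntegral.integral_const_mul,
    ← intervalIntegral.integral_of_le (by linarith : (n:ℝ) ≤ (n:ℝ)+1),
    ← intervalIntegral.integral_const_mul]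
  refine intervalIntegral.integral_mono_on (by linarith)
    ((ivIntE hN n σ).const_mul _) (ivIntC hN n _) ?_
  intro t ht
  have h1 : (0:ℝ) ≤ n := Nat.cast_nonneg n
  rw [mul_one_div, mul_div_assoc', ← Real.exp_add]
  have h4 : -(1/σ) + -t/σ ≤ -((n:ℝ)+1)/σ := by
    rw [show -(1/σ) + -t/σ = (-(1+t))/σ by ring]
    have h5 : (-(1+t)) ≤ -((n:ℝ)+1) := by linarith [ht.1]
    gcongr
  gcongr <;> first
    | linarith [ht.1]
    | exact h4

end LogSeriesAux

open LogSeriesAux Set in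
set_option maxHeartbeats 2000000 in
theorem log_series_asymptotics (N : ℕ) (hN : 2 ≤ N) :
    (fun σ : ℝ =>
        (Real.log N +
            ∑' n : ℕ, exp (-((n : ℝ) + 1) / σ) *
              Real.log (((n : ℝ) + 1 + N) / ((n : ℝ) + N))) -
          (Real.log (σ + N) + constC))
      =O[atTop] fun σ => Real.log σ / σ := by
  have hN1 : 1 ≤ N := le_trans one_le_two hN
  have hNr : (1:ℝ) ≤ N := by exact_mod_cast hN1
  have hNr0 : (0:ℝ) < N := by linarith
  set c1 : ℝ := |constC| + 2 with hc1
  have hc1pos : 0 < c1 := by positivity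
  rw [Asymptotics.isBigO_iff]
  refine ⟨3*c1 + 3*N*c1 + 2*N, ?_⟩
  filter_upwards [eventually_ge_atTop (max (N:ℝ) 3)] with σ hσmax
  have hσN : (N:ℝ) ≤ σ := le_trans (le_max_left _ _) hσmax
  have hσ3 : (3:ℝ) ≤ σ := le_trans (le_max_right _ _) hσmax
  have hσ0 : (0:ℝ) < σ := by linarith
  have hlog1 : 1 ≤ Real.log σ := by
    rw [Real.le_log_iff_exp_le hσ0]
    have := Real.exp_one_lt_d9
    linarith
  set δ : ℝ := (N:ℝ)/σ with hδdef
  have hδ0 : 0 < δ := by positivity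
  have hδ1 : δ ≤ 1 := by rw [hδdef, div_le_one hσ0]; exact hσN
  set E₁ : ℝ := ∫ x in Ioc (0:ℝ) δ, (exp (-x) - 1) / x with hE₁def
  set J : ℝ := ∫ x in Ioi δ, exp (-x) / x with hJdef
  set I : ℝ := ∫ t in Ioi (0:ℝ), exp (-t/σ) / (t + N) with hIdef
  set S : ℝ := ∑' n : ℕ, exp (-((n : ℝ) + 1) / σ) *
      Real.log (((n : ℝ) + 1 + N) / ((n : ℝ) + N)) with hSdef
  have hE : |E₁| ≤ δ := Kbound hδ0.le
  have hJ : J = constC - Real.log δ - E₁ := Jform hδ0 hδ1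
  have hlogδ : Real.log δ = Real.log N - Real.log σ :=
    Real.log_div (by positivity) (by positivity)
  have hJ0 : 0 ≤ J := by
    rw [hJdef]
    refine setIntegral_nonneg measurableSet_Ioi fun x hx => ?_
    have : (0:ℝ) < x := hδ0.trans hx
    positivity
  have hlogδ_bd : -Real.log σ ≤ Real.log δ ∧ Real.log δ ≤ 0 := by
    constructor
    · rw [hlogδ]
      have : 0 ≤ Real.log N := Real.log_nonneg hNr
      linarith
    · exact Real.log_nonpos hδ0.le hδ1
  have hJle : J ≤ c1 * Real.log σ := by
    rw [hJ]
    have h1 : constC ≤ |constC| := le_abs_self _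
    have h2 : -δ ≤ -E₁ ∧ -E₁ ≤ δ := by
      constructor <;> [linarith [(abs_le.1 hE).2]; linarith [(abs_le.1 hE).1]]
    have : |constC| * 1 ≤ |constC| * Real.log σ :=
      mul_le_mul_of_nonneg_left hlog1 (abs_nonneg _)
    nlinarith [hlogδ_bd.1, h2.2, hδ1]
  have hIJ : I = exp δ * J := by
    rw [hIdef, hJdef, hδdef]
    exact Isub hNr0 hσ0
  have hexpδ : exp δ - 1 ≤ 3*δ ∧ 0 ≤ exp δ - 1 := by
    have h1 := Real.add_one_le_exp (-δ)
    have h2 : exp δ * exp (-δ) = 1 := by rw [← Real.exp_add]; simp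
    have h3 : exp δ ≤ exp 1 := Real.exp_le_exp.2 hδ1
    have h4 := Real.exp_one_lt_d9
    have h5 := Real.add_one_le_exp δ
    constructor
    · nlinarith [Real.exp_pos δ]
    · linarith
  have hImJ : 0 ≤ I - J ∧ I - J ≤ 3*N*c1*(Real.log σ/σ) := by
    have heq : I - J = (exp δ - 1) * J := by rw [hIJ]; ring
    constructor
    · rw [heq]; exact mul_nonneg hexpδ.2 hJ0
    · rw [heq]
      calc (exp δ - 1) * J ≤ (3*δ) * (c1 * Real.log σ) := by
            apply mul_le_mul hexpδ.1 hJle hJ0; positivity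
        _ = 3*N*c1*(Real.log σ/σ) := by rw [hδdef]; field_simp
  have hI0 : 0 ≤ I := by
    rw [hIdef]
    refine setIntegral_nonneg measurableSet_Ioi fun t ht => ?_
    have ht0 : (0:ℝ) < t := ht
    positivity
  have hIle : I ≤ 3*c1*Real.log σ := by
    have h3 : exp δ ≤ exp 1 := Real.exp_le_exp.2 hδ1
    have h4 := Real.exp_one_lt_d9
    have : I ≤ 3 * J := by
      rw [hIJ]
      apply mul_le_mul_of_nonneg_right _ hJ0
      linarith
    nlinarith
  -- Sum vs integral
  have hA : HasSum (fun n : ℕ => ∫ t in Ioc (n:ℝ) ((n:ℝ)+1), exp (-t/σ) / (t + N)) I := by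
    have hint : IntegrableOn (fun t => exp (-t/σ) / (t + (N:ℝ))) (⋃ n : ℕ, Ioc (n:ℝ) ((n:ℝ)+1)) := by
      rw [show (⋃ n : ℕ, Ioc (n:ℝ) ((n:ℝ)+1)) = Ioi 0 from unionIoc]
      exact intI hNr0 hσ0
    have := hasSum_integral_iUnion (f := fun t => exp (-t/σ) / (t + (N:ℝ)))
      (fun n : ℕ => measurableSet_Ioc) pairwiseIoc hint
    rwa [show (⋃ n : ℕ, Ioc (n:ℝ) ((n:ℝ)+1)) = Ioi 0 from unionIoc] at this
  have hterm_nonneg : ∀ n : ℕ, 0 ≤ exp (-((n : ℝ) + 1) / σ) *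
      Real.log (((n : ℝ) + 1 + N) / ((n : ℝ) + N)) := by
    intro n
    have h0 : (0:ℝ) < (n:ℝ) + N := by positivity
    apply mul_nonneg (Real.exp_nonneg _)
    apply Real.log_nonneg
    rw [le_div_iff₀ h0]
    linarith
  have hsumm : Summable (fun n : ℕ => exp (-((n : ℝ) + 1) / σ) *
      Real.log (((n : ℝ) + 1 + N) / ((n : ℝ) + N))) :=
    Summable.of_nonneg_of_le hterm_nonneg (fun n => term_upper N hN1 hσ0 n) hA.summable
  have hSle : S ≤ I := by
    rw [hSdef, ← hA.tsum_eq]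
    exact Summable.tsum_le_tsum (fun n => term_upper N hN1 hσ0 n) hsumm hA.summable
  have hSge : exp (-(1/σ)) * I ≤ S := by
    rw [hSdef, ← (hA.mul_left (exp (-(1/σ)))).tsum_eq]
    exact Summable.tsum_le_tsum (fun n => term_lower N hN1 hσ0 n) (hA.mul_left _).summable hsumm
  have hSI : 0 ≤ I - S ∧ I - S ≤ 3*c1*(Real.log σ/σ) := by
    constructor
    · linarith
    · have h1 : 1 - exp (-(1/σ)) ≤ 1/σ := by
        have := Real.add_one_le_exp (-(1/σ)); linarith
      have h2 : I - S ≤ (1 - exp (-(1/σ))) * I := by nlinarith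
      have h3 : (1 - exp (-(1/σ))) * I ≤ (1/σ) * I := by
        apply mul_le_mul_of_nonneg_right h1 hI0
      have h4 : (1/σ) * I ≤ (1/σ) * (3*c1*Real.log σ) := by
        apply mul_le_mul_of_nonneg_left hIle; positivity
      have h5 : (1/σ) * (3*c1*Real.log σ) = 3*c1*(Real.log σ/σ) := by field_simp
      linarith
  have hlogs : 0 ≤ Real.log (σ + N) - Real.log σ ∧
      Real.log (σ + N) - Real.log σ ≤ (N:ℝ)/σ := by
    have he : Real.log (σ + N) - Real.log σ = Real.log ((σ + N)/σ) :=
      (Real.log_div (by positivity) (by positivity)).symm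
    constructor
    · rw [he]
      apply Real.log_nonneg
      rw [le_div_iff₀ hσ0]; linarith
    · rw [he]
      have := Real.log_le_sub_one_of_pos (show (0:ℝ) < (σ+N)/σ by positivity)
      have heq : (σ + N)/σ - 1 = (N:ℝ)/σ := by field_simp; ring
      linarith
  -- Final assembly
  have hF : Real.log N + S - (Real.log (σ + N) + constC)
      = (S - I) + (I - J) - E₁ - (Real.log (σ + N) - Real.log σ) := by
    have : constC = J + Real.log δ + E₁ := by rw [hJ]; ring
    rw [this, hlogδ]; ring
  have hx : 1/σ ≤ Real.log σ / σ := by gcongr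
  have hEbd := abs_le.1 hE
  have hrhs : |Real.log σ / σ| = Real.log σ / σ := abs_of_nonneg (by positivity)
  rw [Real.norm_eq_abs, Real.norm_eq_abs, hrhs, hF]
  rw [abs_le]
  have hNdiv : (N:ℝ)/σ ≤ (N:ℝ) * (Real.log σ/σ) := by
    calc (N:ℝ)/σ = (N:ℝ) * (1/σ) := by ring
      _ ≤ (N:ℝ) * (Real.log σ/σ) := by
          apply mul_le_mul_of_nonneg_left hx (by positivity)
  have hδeq : δ = (N:ℝ)/σ := rfl
  constructor
  · have := hSI.2
    have := hImJ.1
    nlinarith [hc1pos.le, mul_nonneg (mul_nonneg (by norm_num : (0:ℝ) ≤ 3) hNr0.le) hc1pos.le,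
      mul_nonneg hNr0.le (div_nonneg (by linarith : (0:ℝ) ≤ Real.log σ) hσ0.le)]
  · have := hSI.1
    have := hImJ.2
    nlinarith [hlogs.1]
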